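/- Let θ : ℕ → ℝ be positive and nondecreasing with n/θ_n → 0 as n → ∞ (Case C), and fix an integer j ≥ 1. Then (n!/(n−j)!) · (Γ(n+θ_n−j)/Γ(n+θ_n)) · (θ_n/n)^j → 1 as n → ∞. Equivalently, under the Ewens sampling formula the expected number of alleles represented exactly j times, E[C_j^n] = (θ_n/j)·(n!/(n−j)!)·Γ(n+θ_n−j)/Γ(n+θ_n), satisfies E[C_j^n] ∼ (θ_n/j)·(n/θ_n)^j. -/

import Mathlib

open Filter

lemma gamma_prod (j : ℕ) : ∀ x : ℝ, 0 < x - j →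
    Real.Gamma x = Real.Gamma (x - j) * ∏ i ∈ Finset.range j, (x - (i + 1)) := by
  induction j with
  | zero => simp
  | succ j ih =>
    intro x hx
    have hc : ((j : ℝ) + 1) = ((j + 1 : ℕ) : ℝ) := by push_cast; ring
    have hx1 : 0 < x - ((j : ℝ) + 1) := by rw [hc]; exact hx
    have hx' : 0 < x - j := by linarith
    have hne : x - ((j : ℝ) + 1) ≠ 0 := ne_of_gt hx1
    have h1 := Real.Gamma_add_one hne
    have h2 : x - ((j : ℝ) + 1) + 1 = x - j := by ring
    rw [ih x hx', Finset.prod_range_succ]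
    rw [h2] at h1
    rw [h1]
    push_cast
    ring

theorem stmt_15 (θ : ℕ → ℝ) (hpos : ∀ n, 0 < θ n) (hmono : Monotone θ)
    (hC : Tendsto (fun n : ℕ => (n : ℝ) / θ n) atTop (nhds 0))
    (j : ℕ) (hj : 1 ≤ j) :
    Tendsto (fun n : ℕ =>
        ((Nat.factorial n : ℝ) / (Nat.factorial (n - j) : ℝ)) *
          (Real.Gamma ((n : ℝ) + θ n - j) / Real.Gamma ((n : ℝ) + θ n)) *
          (θ n / n) ^ j)
      atTop (nhds 1) := by
  -- θ n → ∞
  have hθtop : Tendsto θ atTop atTop := by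
    have h1 : ∀ᶠ n : ℕ in atTop, (n : ℝ) ≤ θ n := by
      have := hC.eventually (gt_mem_nhds (show (0:ℝ) < 1 by norm_num))
      filter_upwards [this] with n hn
      by_contra h
      push_neg at h
      have hθ := hpos n
      have : (1:ℝ) < (n : ℝ) / θ n := (one_lt_div hθ).2 h
      linarith
    exact tendsto_atTop_mono' _ h1 (tendsto_natCast_atTop_atTop)
  have hinvθ : Tendsto (fun n => (θ n)⁻¹) atTop (nhds 0) := hθtop.inv_tendsto_atTop
  -- each factor tends to 1
  have hfac : ∀ i : ℕ, Tendsto (fun n : ℕ =>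
      (((n : ℝ) - i) / n) * (θ n / ((n : ℝ) + θ n - (i + 1)))) atTop (nhds 1) := by
    intro i
    have h1 : Tendsto (fun n : ℕ => ((n : ℝ) - i) / n) atTop (nhds 1) := by
      have : Tendsto (fun n : ℕ => 1 - (i : ℝ) * (1 / n)) atTop (nhds 1) := by
        have := (tendsto_one_div_atTop_nhds_zero_nat.const_mul (i : ℝ))
        have h := (tendsto_const_nhds (x := (1:ℝ)) (f := atTop (α := ℕ))).sub this
        simpa using h
      apply this.congr'
      filter_upwards [eventually_ge_atTop 1] with n hn
      have hn0 : (n : ℝ) ≠ 0 := by positivity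
      field_simp
    have h2 : Tendsto (fun n : ℕ => θ n / ((n : ℝ) + θ n - (i + 1))) atTop (nhds 1) := by
      have hz : Tendsto (fun n : ℕ => ((n : ℝ) - (i + 1)) / θ n) atTop (nhds 0) := by
        have := hC.sub (hinvθ.const_mul ((i : ℝ) + 1))
        simp only [sub_zero, mul_zero] at this
        apply Tendsto.congr' _ (by simpa using this)
        filter_upwards with n
        rw [sub_div]
        ring_nf
      have := ((hz.add (tendsto_const_nhds (x := (1:ℝ)))).inv₀ (by norm_num))
      simp only [zero_add, inv_one] at this
      apply this.congr'
      filter_upwards with n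
      have hθn := hpos n
      rw [div_add_one (ne_of_gt hθn), inv_div]
      ring_nf
    have := h1.mul h2
    simpa using this
  have hprod : Tendsto (fun n : ℕ => ∏ i ∈ Finset.range j,
      (((n : ℝ) - i) / n) * (θ n / ((n : ℝ) + θ n - (i + 1)))) atTop (nhds 1) := by
    have := tendsto_finset_prod (Finset.range j)
      (fun i _ => hfac i)
    simpa using this
  apply hprod.congr'
  filter_upwards [eventually_ge_atTop (j + 1)] with n hn
  have hnj : j ≤ n := by omega
  have hn1 : 1 ≤ n := by omega
  have hnR : (j : ℝ) ≤ (n : ℝ) := by exact_mod_cast hnj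
  have hn0 : (0:ℝ) < n := by positivity
  have hθn := hpos n
  -- factorial ratio
  have hfact : ((Nat.factorial n : ℝ) / (Nat.factorial (n - j) : ℝ)) =
      ∏ i ∈ Finset.range j, ((n : ℝ) - i) := by
    have h := Nat.factorial_mul_descFactorial hnj
    have hdf : (Nat.descFactorial n j : ℝ) = ∏ i ∈ Finset.range j, ((n : ℝ) - i) := by
      rw [Nat.descFactorial_eq_prod_range]
      push_cast [Finset.prod_natCast]
      apply Finset.prod_congr rfl
      intro i hi
      have : i ≤ n := le_trans (le_of_lt (Finset.mem_range.1 hi)) hnj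
      push_cast [Nat.cast_sub this]
      ring
    rw [div_eq_iff (by positivity : (Nat.factorial (n - j) : ℝ) ≠ 0), ← hdf,
      ← Nat.cast_mul]
    exact_mod_cast (by rw [mul_comm, h] : n.factorial = n.descFactorial j * (n-j).factorial)
  -- Gamma ratio
  have hx : (0:ℝ) < ((n : ℝ) + θ n) - j := by linarith
  have hg := gamma_prod j ((n : ℝ) + θ n) hx
  have hgpos : 0 < Real.Gamma ((n : ℝ) + θ n - j) := Real.Gamma_pos_of_pos hx
  have hprodpos : ∀ i ∈ Finset.range j, (0:ℝ) < (n : ℝ) + θ n - (i + 1) := by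
    intro i hi
    have hi' : (i : ℝ) + 1 ≤ (j : ℝ) := by
      have := Finset.mem_range.1 hi
      exact_mod_cast this
    linarith
  have hppos : (0:ℝ) < ∏ i ∈ Finset.range j, ((n : ℝ) + θ n - (i + 1)) :=
    Finset.prod_pos hprodpos
  have hgr : Real.Gamma ((n : ℝ) + θ n - j) / Real.Gamma ((n : ℝ) + θ n) =
      (∏ i ∈ Finset.range j, ((n : ℝ) + θ n - (i + 1)))⁻¹ := by
    rw [hg, div_mul_cancel_left₀ (ne_of_gt hgpos)]
  -- put it together
  rw [hfact, hgr, Finset.prod_mul_distrib, Finset.prod_div_distrib,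
    Finset.prod_div_distrib, Finset.prod_const, Finset.prod_const,
    Finset.card_range, div_pow]
  field_simp
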